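/- Let X be a finite-dimensional Hilbert space, P ⊆ X a nonempty bounded set, K ≥ 0, c > 0, and ψ : P → ℝ a Lipschitz function such that for each p ∈ P there exists h_p ∈ X* with ‖h_p‖ ≤ K and ψ(p + Δ) − ψ(p) − h_p(Δ) ≤ c|Δ|² whenever Δ ≠ 0 and p + Δ ∈ P. Then there exists a Lipschitz semiconcave function F on X with F restricted to P equal to ψ. -/

import Mathlib

open Set
open scoped NNReal

noncomputable section

private lemma phiCvx19 {r a b s t : ℝ} (ha : 0 ≤ a) (hb : 0 ≤ b) (hab : a + b = 1) :
    max (a*s + b*t - r) 0 ^ 2 ≤ a * max (s-r) 0 ^ 2 + b * max (t-r) 0 ^ 2 := by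
  set m := max (s-r) 0 with hmdef
  set n := max (t-r) 0 with hndef
  have hm0 : 0 ≤ m := le_max_right _ _
  have hn0 : 0 ≤ n := le_max_right _ _
  have hm : s - r ≤ m := le_max_left _ _
  have hn : t - r ≤ n := le_max_left _ _
  have hr1 : a*r + b*r = r := by linear_combination r * hab
  have h1 : max (a*s + b*t - r) 0 ≤ a*m + b*n := by
    apply max_le _ (by positivity)
    have ha1 := mul_le_mul_of_nonneg_left hm ha
    have hb1 := mul_le_mul_of_nonneg_left hn hb
    nlinarith [ha1, hb1]
  have h2 : (a*m+b*n)^2 ≤ a*m^2 + b*n^2 := by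
    nlinarith [mul_nonneg (mul_nonneg ha hb) (sq_nonneg (m-n)), sq_nonneg m, sq_nonneg n]
  calc max (a*s+b*t-r) 0 ^2 ≤ (a*m+b*n)^2 := pow_le_pow_left₀ (le_max_right _ _) h1 2
    _ ≤ _ := h2

private lemma Qlip19 {c r u v : ℝ} (hc : 0 ≤ c) (hr : 0 ≤ r) (hv : 0 ≤ v) (huv : v ≤ u) :
    c*(u^2 - max (u-r) 0 ^2) - c*(v^2 - max (v-r) 0 ^2) ≤ 2*c*r*(u-v) ∧
    0 ≤ c*(u^2 - max (u-r) 0 ^2) - c*(v^2 - max (v-r) 0 ^2) := by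
  rcases le_total u r with h1 | h1 <;> rcases le_total v r with h2 | h2
  · rw [max_eq_right (by linarith), max_eq_right (by linarith)]
    constructor
    · nlinarith [mul_nonneg hc (mul_nonneg (sub_nonneg.2 huv)
        (show (0:ℝ) ≤ 2*r - u - v by linarith))]
    · nlinarith [mul_nonneg hc (mul_nonneg (sub_nonneg.2 huv)
        (show (0:ℝ) ≤ u + v by linarith))]
  · -- u ≤ r ≤ v ≤ u : all equal
    have huv' : u = v := le_antisymm (by linarith) huv
    subst huv'
    simp
  · rw [max_eq_left (by linarith), max_eq_right (by linarith)]
    constructor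
    · nlinarith [mul_nonneg hc (sq_nonneg (r - v))]
    · nlinarith [mul_nonneg hc (mul_nonneg (show (0:ℝ) ≤ u - r by linarith) hr),
        mul_nonneg hc (mul_nonneg (show (0:ℝ) ≤ r - v by linarith)
          (show (0:ℝ) ≤ r + v by linarith))]
  · rw [max_eq_left (by linarith), max_eq_left (by linarith)]
    constructor <;> nlinarith [mul_nonneg (mul_nonneg hc hr) (sub_nonneg.2 huv)]

private lemma Qnonneg19 {c r u : ℝ} (hc : 0 ≤ c) (hr : 0 ≤ r) (hu : 0 ≤ u) :
    0 ≤ c*(u^2 - max (u-r) 0 ^2) := by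
  have := (Qlip19 (v := 0) hc hr le_rfl hu).2
  have h0 : max (0-r) 0 = 0 := max_eq_right (by linarith)
  rw [h0] at this
  nlinarith [this]

set_option maxHeartbeats 1000000 in
/-- A Lipschitz function on a bounded set admitting uniformly bounded approximate upper
supports extends to a Lipschitz semiconcave function on the whole space. -/
theorem stmt19 {X : Type*} [NormedAddCommGroup X] [InnerProductSpace ℝ X]
    [FiniteDimensional ℝ X]
    (P : Set X) (hP : P.Nonempty) (hPb : Bornology.IsBounded P)
    (K c : ℝ) (hK : 0 ≤ K) (hc : 0 < c)
    (ψ : X → ℝ) (hψ : ∃ C : ℝ≥0, LipschitzOnWith C ψ P)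
    (h : ∀ p ∈ P, ∃ hp : X →L[ℝ] ℝ, ‖hp‖ ≤ K ∧
      ∀ Δ : X, Δ ≠ 0 → p + Δ ∈ P → ψ (p + Δ) - ψ p - hp Δ ≤ c * ‖Δ‖ ^ 2) :
    ∃ F : X → ℝ, (∃ C : ℝ≥0, LipschitzWith C F) ∧
      (∃ C' : ℝ, 0 ≤ C' ∧ ConcaveOn ℝ univ (fun x => F x - C' / 2 * ‖x‖ ^ 2)) ∧
      EqOn F ψ P := by
  classical
  obtain ⟨R0, hR0⟩ := hPb.subset_closedBall 0
  set R : ℝ := max R0 0 with hRdef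
  have hRnn : (0:ℝ) ≤ R := le_max_right _ _
  have hPR : ∀ p ∈ P, ‖p‖ ≤ R := by
    intro p hp
    have := hR0 hp
    rw [Metric.mem_closedBall, dist_zero_right] at this
    exact this.trans (le_max_left _ _)
  set r : ℝ := 2*R with hrdef
  have hrnn : (0:ℝ) ≤ r := by positivity
  choose H hH1 hH2 using fun p : P => h p p.2
  obtain ⟨Cψ, hLip⟩ := hψ
  have hne : Nonempty P := hP.to_subtype
  obtain ⟨p0, hp0⟩ := hP
  set f : P → X → ℝ := fun p x =>
    ψ p + H p (x - p) + c*(‖x - (p:X)‖^2 - max (‖x - (p:X)‖ - r) 0 ^2) with hfdef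
  -- uniform lower bound at each point
  have lower : ∀ (x : X) (p : P), ψ p0 - (Cψ:ℝ)*(2*R) - K*(‖x‖+R) ≤ f p x := by
    intro x p
    have hψp : ψ p0 - (Cψ:ℝ)*(2*R) ≤ ψ p := by
      have hd : dist (ψ p) (ψ p0) ≤ (Cψ:ℝ) * dist (p:X) p0 := hLip.dist_le_mul _ p.2 _ hp0
      rw [Real.dist_eq] at hd
      have hd2 : dist (p:X) p0 ≤ 2*R := by
        rw [dist_eq_norm]
        have := norm_sub_le (p:X) p0
        have h1 := hPR p p.2
        have h2 := hPR p0 hp0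
        linarith
      have h3 : |ψ p - ψ p0| ≤ (Cψ:ℝ)*(2*R) :=
        hd.trans (mul_le_mul_of_nonneg_left hd2 Cψ.coe_nonneg)
      linarith [(abs_le.1 h3).1]
    have hHterm : -(K*(‖x‖+R)) ≤ H p (x - p) := by
      have h1 : |H p (x - p)| ≤ K * ‖x - (p:X)‖ := by
        calc |H p (x - p)| ≤ ‖H p‖ * ‖x - (p:X)‖ := (H p).le_opNorm _
          _ ≤ K * ‖x - (p:X)‖ := mul_le_mul_of_nonneg_right (hH1 p) (norm_nonneg _)
      have h2 : ‖x - (p:X)‖ ≤ ‖x‖ + R := by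
        have := norm_sub_le x (p:X)
        linarith [hPR p p.2]
      have h3 := (abs_le.1 h1).1
      nlinarith [mul_le_mul_of_nonneg_left h2 hK]
    have hQ : 0 ≤ c*(‖x - (p:X)‖^2 - max (‖x - (p:X)‖ - r) 0 ^2) :=
      Qnonneg19 hc.le hrnn (norm_nonneg _)
    show ψ p0 - (Cψ:ℝ)*(2*R) - K*(‖x‖+R) ≤
      ψ p + H p (x - p) + c*(‖x - (p:X)‖^2 - max (‖x - (p:X)‖ - r) 0 ^2)
    linarith
  have bdd : ∀ x : X, BddBelow (Set.range fun p : P => f p x) := by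
    intro x
    refine ⟨ψ p0 - (Cψ:ℝ)*(2*R) - K*(‖x‖+R), ?_⟩
    rintro z ⟨p, rfl⟩
    exact lower x p
  set F : X → ℝ := fun x => ⨅ p : P, f p x with hFdef
  -- per-index Lipschitz bound
  set L : ℝ := K + 2*c*r with hLdef
  have hLnn : 0 ≤ L := by positivity
  have flip : ∀ (p : P) (x y : X), f p x - f p y ≤ L * ‖x - y‖ := by
    intro p x y
    have hsub : (x - (p:X)) - (y - (p:X)) = x - y := by abel
    have hHd : H p (x - p) - H p (y - p) ≤ K * ‖x - y‖ := by
      have h1 : H p (x - p) - H p (y - p) = H p (x - y) := by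
        rw [← map_sub, hsub]
      rw [h1]
      calc H p (x - y) ≤ |H p (x - y)| := le_abs_self _
        _ ≤ ‖H p‖ * ‖x - y‖ := (H p).le_opNorm _
        _ ≤ K * ‖x - y‖ := mul_le_mul_of_nonneg_right (hH1 p) (norm_nonneg _)
    have hnd : |‖x - (p:X)‖ - ‖y - (p:X)‖| ≤ ‖x - y‖ := by
      have := abs_norm_sub_norm_le (x - (p:X)) (y - (p:X))
      rwa [hsub] at this
    have hQd : c*(‖x - (p:X)‖^2 - max (‖x - (p:X)‖ - r) 0 ^2)
        - c*(‖y - (p:X)‖^2 - max (‖y - (p:X)‖ - r) 0 ^2) ≤ 2*c*r*‖x - y‖ := by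
      rcases le_total ‖y - (p:X)‖ ‖x - (p:X)‖ with hle | hle
      · have h1 := (Qlip19 hc.le hrnn (norm_nonneg _) hle).1
        have h2 : ‖x - (p:X)‖ - ‖y - (p:X)‖ ≤ ‖x - y‖ := (abs_le.1 hnd).2
        have h3 := mul_le_mul_of_nonneg_left h2 (show (0:ℝ) ≤ 2*c*r by positivity)
        linarith
      · have h1 := (Qlip19 hc.le hrnn (norm_nonneg _) hle).2
        have h3 : 0 ≤ 2*c*r*‖x - y‖ := by positivity
        linarith
    show ψ p + H p (x - p) + c*(‖x - (p:X)‖^2 - max (‖x - (p:X)‖ - r) 0 ^2)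
        - (ψ p + H p (y - p) + c*(‖y - (p:X)‖^2 - max (‖y - (p:X)‖ - r) 0 ^2))
        ≤ (K + 2*c*r) * ‖x - y‖
    nlinarith [hQd, hHd]
  -- Lipschitz of F
  have hFd : ∀ x y : X, F x - F y ≤ L * ‖x - y‖ := by
    intro x y
    have h2 : F x - L*‖x - y‖ ≤ F y := by
      show F x - L*‖x - y‖ ≤ ⨅ p : P, f p y
      apply le_ciInf
      intro p
      have ha : F x ≤ f p x := ciInf_le (bdd x) p
      have hb := flip p x y
      linarith
    linarith
  refine ⟨F, ⟨⟨L, hLnn⟩, ?_⟩, ⟨2*c, by positivity, ?_⟩, ?_⟩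
  · apply LipschitzWith.of_dist_le_mul
    intro x y
    rw [Real.dist_eq, dist_eq_norm]
    rw [abs_sub_le_iff]
    refine ⟨hFd x y, ?_⟩
    have := hFd y x
    rwa [norm_sub_rev] at this
  · -- concavity
    have key : ConcaveOn ℝ univ (fun x => F x - c * ‖x‖^2) := by
      refine ⟨convex_univ, ?_⟩
      intro x _ y _ a b ha hb hab
      have hb' : b = 1 - a := by linarith
      subst hb'
      simp only [smul_eq_mul]
      have keyp : ∀ p : P, a * (f p x - c*‖x‖^2) + (1-a) * (f p y - c*‖y‖^2) ≤
          f p (a•x + (1-a)•y) - c*‖a•x + (1-a)•y‖^2 := by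
        intro p
        have hzp : a • x + (1-a) • y - (p:X) = a • (x - (p:X)) + (1-a) • (y - (p:X)) := by
          match_scalars <;> ring
        have hx2 : ‖x - (p:X)‖^2 = ‖x‖^2 - 2*inner ℝ x (p:X) + ‖(p:X)‖^2 :=
          norm_sub_sq_real x (p:X)
        have hy2 : ‖y - (p:X)‖^2 = ‖y‖^2 - 2*inner ℝ y (p:X) + ‖(p:X)‖^2 :=
          norm_sub_sq_real y (p:X)
        have hz2 : ‖a•x + (1-a)•y - (p:X)‖^2 =
            ‖a•x + (1-a)•y‖^2 - 2*inner ℝ (a•x + (1-a)•y) (p:X) + ‖(p:X)‖^2 :=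
          norm_sub_sq_real _ (p:X)
        have hiz : (inner ℝ (a•x + (1-a)•y) (p:X) : ℝ)
            = a*inner ℝ x (p:X) + (1-a)*inner ℝ y (p:X) := by
          rw [inner_add_left, real_inner_smul_left, real_inner_smul_left]
        have hHz : H p (a•x + (1-a)•y - (p:X)) = a * H p (x - (p:X)) + (1-a) * H p (y - (p:X)) := by
          rw [hzp, map_add, map_smul, map_smul]
          simp [smul_eq_mul]
        have hnz : ‖a•x + (1-a)•y - (p:X)‖ ≤ a*‖x - (p:X)‖ + (1-a)*‖y - (p:X)‖ := by
          rw [hzp]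
          refine (norm_add_le _ _).trans ?_
          rw [norm_smul, norm_smul, Real.norm_eq_abs, Real.norm_eq_abs,
            abs_of_nonneg ha, abs_of_nonneg hb]
        have hφ : max (‖a•x + (1-a)•y - (p:X)‖ - r) 0 ^2 ≤
            a * max (‖x - (p:X)‖ - r) 0 ^2 + (1-a) * max (‖y - (p:X)‖ - r) 0 ^2 := by
          refine le_trans ?_ (phiCvx19 (s := ‖x - (p:X)‖) (t := ‖y - (p:X)‖) ha hb hab)
          exact pow_le_pow_left₀ (le_max_right _ _)
            (max_le_max (by linarith) le_rfl) 2
        have hφ' := mul_le_mul_of_nonneg_left hφ hc.le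
        show a * (ψ p + H p (x - (p:X)) + c*(‖x - (p:X)‖^2 - max (‖x - (p:X)‖ - r) 0 ^2) - c*‖x‖^2)
            + (1-a) * (ψ p + H p (y - (p:X)) + c*(‖y - (p:X)‖^2 - max (‖y - (p:X)‖ - r) 0 ^2) - c*‖y‖^2)
            ≤ ψ p + H p (a•x + (1-a)•y - (p:X))
              + c*(‖a•x + (1-a)•y - (p:X)‖^2 - max (‖a•x + (1-a)•y - (p:X)‖ - r) 0 ^2)
              - c*‖a•x + (1-a)•y‖^2
        rw [hx2, hy2, hz2, hiz, hHz]
        nlinarith [hφ']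
      have h1 : ∀ p : P, a * (F x - c*‖x‖^2) + (1-a) * (F y - c*‖y‖^2) + c*‖a•x + (1-a)•y‖^2
          ≤ f p (a•x + (1-a)•y) := by
        intro p
        have hx : F x ≤ f p x := ciInf_le (bdd x) p
        have hy : F y ≤ f p y := ciInf_le (bdd y) p
        have hk := keyp p
        nlinarith [mul_le_mul_of_nonneg_left hx ha, mul_le_mul_of_nonneg_left hy hb]
      have h2 : a * (F x - c*‖x‖^2) + (1-a) * (F y - c*‖y‖^2) + c*‖a•x + (1-a)•y‖^2
          ≤ F (a•x + (1-a)•y) := le_ciInf h1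
      linarith
    have heq : (fun x => F x - 2*c/2 * ‖x‖^2) = (fun x => F x - c * ‖x‖^2) := by
      funext x; ring_nf
    rw [heq]
    exact key
  · -- EqOn
    intro p hp
    have hub : F p ≤ ψ p := by
      have h1 : F p ≤ f ⟨p, hp⟩ p := ciInf_le (bdd p) ⟨p, hp⟩
      have h2 : f ⟨p, hp⟩ p = ψ p := by
        show ψ p + H ⟨p, hp⟩ (p - p) + c*(‖p - p‖^2 - max (‖p - p‖ - r) 0 ^2) = ψ p
        rw [sub_self, norm_zero, map_zero]
        rw [max_eq_right (by linarith : (0:ℝ) - r ≤ 0)]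
        ring
      rw [h2] at h1
      exact h1
    have hlb : ψ p ≤ F p := by
      apply le_ciInf
      intro q
      have hdr : ‖p - (q:X)‖ ≤ r := by
        have := norm_sub_le p (q:X)
        have h1 := hPR p hp
        have h2 := hPR q q.2
        show ‖p - (q:X)‖ ≤ 2*R
        linarith
      have hmax : max (‖p - (q:X)‖ - r) 0 = 0 := max_eq_right (by linarith)
      show ψ p ≤ ψ q + H q (p - (q:X)) + c*(‖p - (q:X)‖^2 - max (‖p - (q:X)‖ - r) 0 ^2)
      rw [hmax]
      by_cases hpq : p = (q:X)
      · rw [hpq, sub_self, norm_zero, map_zero]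
        nlinarith []
      · have hΔ : p - (q:X) ≠ 0 := sub_ne_zero.2 hpq
        have hmem : (q:X) + (p - q) ∈ P := by
          rw [add_sub_cancel]
          exact hp
        have hkey := hH2 q (p - q) hΔ hmem
        rw [add_sub_cancel] at hkey
        nlinarith [hkey]
    exact le_antisymm hub hlb
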